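/- Let q be a prime power, s a divisor of n, and 𝒰 a k-dimensional F_q-subspace of F_{q^n} whose F_{q^s}-span has F_{q^s}-dimension equal to k (i.e., some F_q-basis of 𝒰 is F_{q^s}-linearly independent). Then the orbit of 𝒰 under the group of F_{q^s}-linear automorphisms of F_{q^n} has cardinality ∏_{i=0}^{k-1}(q^n - q^{is}) / ∏_{i=0}^{k-1}(q^k - q^i). -/

import Mathlib

open Module Submodule

lemma exists_equiv_map {E K : Type*} [Field E] [AddCommGroup K] [Module E K]
    [FiniteDimensional E K] {k : ℕ} {b v : Fin k → K}
    (hb : LinearIndependent E b) (hv : LinearIndependent E v) :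
    ∃ φ : K ≃ₗ[E] K, ∀ i, φ (b i) = v i := by
  set W1 := span E (Set.range b)
  set W2 := span E (Set.range v)
  obtain ⟨C1, hC1⟩ := W1.exists_isCompl
  obtain ⟨C2, hC2⟩ := W2.exists_isCompl
  have h1 := Submodule.finrank_add_eq_of_isCompl hC1
  have h2 := Submodule.finrank_add_eq_of_isCompl hC2
  have hW1 : finrank E W1 = k := by
    simpa using finrank_span_eq_card hb
  have hW2 : finrank E W2 = k := by
    simpa using finrank_span_eq_card hv
  have hC : finrank E C1 = finrank E C2 := by omega
  obtain ⟨ψ⟩ := FiniteDimensional.nonempty_linearEquiv_of_finrank_eq hC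
  let e : W1 ≃ₗ[E] W2 := (Basis.span hb).equiv (Basis.span hv) (Equiv.refl _)
  refine ⟨((prodEquivOfIsCompl W1 C1 hC1).symm.trans (e.prodCongr ψ)).trans
    (prodEquivOfIsCompl W2 C2 hC2), fun i => ?_⟩
  have hbm : b i ∈ W1 := subset_span ⟨i, rfl⟩
  have : (prodEquivOfIsCompl W1 C1 hC1).symm (b i) = (⟨b i, hbm⟩, 0) := by
    have h := Submodule.prodEquivOfIsCompl_symm_apply_left (p := W1) (q := C1) hC1 ⟨b i, hbm⟩
    simpa using h
  simp only [LinearEquiv.trans_apply, this, LinearEquiv.prodCongr_apply, map_zero,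
    coe_prodEquivOfIsCompl']
  have : e ⟨b i, hbm⟩ = ⟨v i, subset_span ⟨i, rfl⟩⟩ := by
    have hb' : (⟨b i, hbm⟩ : W1) = Basis.span hb i := by
      ext; simp [Basis.span_apply]
    rw [hb', Basis.equiv_apply]
    exact Basis.span_apply hv i
  simp [this]

lemma auxIndepOfSpan {F E K : Type*} [Field F] [Field E] [Field K]
    [Algebra F E] [Algebra E K] [Algebra F K] [IsScalarTower F E K]
    {k : ℕ} {w : Fin k → K} {V : Submodule F K}
    (hw : Submodule.span F (Set.range w) = V)
    (hV : Module.finrank E ↥(Submodule.span E (V : Set K)) = k) :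
    LinearIndependent E w := by
  have hsub : Set.range w ⊆ (V : Set K) := hw ▸ Submodule.subset_span
  have hse : Submodule.span E (Set.range w) = Submodule.span E (V : Set K) := by
    apply le_antisymm (Submodule.span_mono hsub)
    rw [Submodule.span_le]
    intro x hx
    have hx' : x ∈ Submodule.span F (Set.range w) := hw ▸ hx
    exact Submodule.span_le_restrictScalars F E _ hx'
  rw [linearIndependent_iff_card_eq_finrank_span]
  show Fintype.card (Fin k) = finrank E (span E (Set.range w))
  rw [hse, hV, Fintype.card_fin]


/-- Let `F ⊆ E ⊆ K` be finite fields (`F = F_q`, `E = F_{q^s}`, `K = F_{q^n}`) and `𝒰`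
a `k`-dimensional `F`-subspace of `K` whose `E`-span has `E`-dimension `k`. Then the orbit
of `𝒰` under the `E`-linear automorphisms of `K` has cardinality
`∏_{i<k}(q^n - q^{is}) / ∏_{i<k}(q^k - q^i)`. -/
theorem stmt11 (F E K : Type*) [Field F] [Field E] [Field K]
    [Algebra F E] [Algebra E K] [Algebra F K] [IsScalarTower F E K]
    [Fintype F] [Fintype E] [Fintype K]
    (k : ℕ) (𝒰 : Submodule F K) (hdim : Module.finrank F ↥𝒰 = k)
    (hspan : Module.finrank E ↥(Submodule.span E (𝒰 : Set K)) = k) :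
    Set.ncard {V : Submodule F K | ∃ φ : K ≃ₗ[E] K,
        V = 𝒰.map (φ.toLinearMap.restrictScalars F)} *
      ∏ i ∈ Finset.range k, (Fintype.card F ^ k - Fintype.card F ^ i)
      = ∏ i ∈ Finset.range k, (Fintype.card K - Fintype.card E ^ i) := by
  classical
  set q := Fintype.card F with hq
  set O := {V : Submodule F K | ∃ φ : K ≃ₗ[E] K,
      V = 𝒰.map (φ.toLinearMap.restrictScalars F)} with hOdef
  -- a basis of 𝒰 over F, viewed in K
  let B := Module.finBasisOfFinrankEq F ↥𝒰 hdim
  let b : Fin k → K := fun i => (B i : K)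
  have hbspan : span F (Set.range b) = 𝒰 := by
    have hr : Set.range b = 𝒰.subtype '' Set.range ⇑B := by
      rw [← Set.range_comp]; rfl
    rw [hr, Submodule.span_image, B.span_eq, Submodule.map_subtype_top]
  have hbE : LinearIndependent E b := auxIndepOfSpan hbspan hspan
  -- membership in the orbit
  have hmem : ∀ v : Fin k → K, LinearIndependent E v → span F (Set.range v) ∈ O := by
    intro v hv
    obtain ⟨φ, hφ⟩ := exists_equiv_map hbE hv
    refine ⟨φ, ?_⟩
    rw [← hbspan, Submodule.map_span]
    congr 1
    rw [← Set.range_comp]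
    exact (congrArg Set.range (funext fun i => hφ i)).symm
  -- properties of orbit members
  have hprops : ∀ V ∈ O, Module.finrank F ↥V = k ∧
      Module.finrank E ↥(span E (V : Set K)) = k := by
    rintro V ⟨φ, rfl⟩
    constructor
    · exact (LinearEquiv.finrank_map_eq (φ.restrictScalars F) 𝒰).trans hdim
    · have hc : ((𝒰.map (φ.toLinearMap.restrictScalars F)) : Set K)
          = ⇑φ.toLinearMap '' (𝒰 : Set K) := rfl
      rw [hc, ← Submodule.map_span]
      exact (LinearEquiv.finrank_map_eq φ (span E (𝒰 : Set K))).trans hspan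
  have hk_le : k ≤ finrank E K := by simpa using hbE.fintype_card_le_finrank
  -- cardinality of each fiber
  have hfiber : ∀ V ∈ O,
      Nat.card {v : Fin k → K // LinearIndependent E v ∧ span F (Set.range v) = V}
        = ∏ i ∈ Finset.range k, (q ^ k - q ^ i) := by
    intro V hV
    obtain ⟨hVdim, hVspan⟩ := hprops V hV
    have key1 : ∀ w : Fin k → V, LinearIndependent F w →
        span F (Set.range fun i => ((w i : K))) = V := by
      intro w hw
      have h1 : span F (Set.range w) = ⊤ := by
        apply Submodule.eq_top_of_finrank_eq
        rw [finrank_span_eq_card hw, Fintype.card_fin, hVdim]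
      have hr : (Set.range fun i => ((w i : K))) = V.subtype '' Set.range w := by
        rw [← Set.range_comp]; rfl
      rw [hr, Submodule.span_image, h1, Submodule.map_subtype_top]
    have key2 : ∀ w : Fin k → V, LinearIndependent F w →
        LinearIndependent E (fun i => ((w i : K))) := fun w hw =>
      auxIndepOfSpan (key1 w hw) hVspan
    have e : {w : Fin k → V // LinearIndependent F w} ≃
        {v : Fin k → K // LinearIndependent E v ∧ span F (Set.range v) = V} := by
      refine Equiv.ofBijective
        (fun w => ⟨fun i => (w.1 i : K), key2 w.1 w.2, key1 w.1 w.2⟩) ⟨?_, ?_⟩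
      · intro w w' h
        apply Subtype.ext; funext i
        exact Subtype.ext (congrFun (congrArg Subtype.val h) i)
      · rintro ⟨v, hvE, hvspan⟩
        have hvV : ∀ i, v i ∈ V := fun i => hvspan ▸ subset_span ⟨i, rfl⟩
        have hinj : Function.Injective fun r : F => r • (1 : E) := by
          simpa only [Algebra.smul_def, mul_one] using (algebraMap F E).injective
        have hvF : LinearIndependent F v := hvE.restrict_scalars hinj
        refine ⟨⟨fun i => ⟨v i, hvV i⟩, ?_⟩, ?_⟩
        · exact LinearIndependent.of_comp V.subtype (by exact hvF)
        · exact Subtype.ext rfl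
    rw [← Nat.card_congr e, card_linearIndependent (le_of_eq hVdim.symm)]
    rw [← Fin.prod_univ_eq_prod_range fun i => q ^ k - q ^ i]
    exact Finset.prod_congr rfl fun i _ => by rw [hVdim]
  -- total count of E-independent tuples
  have htotal : Nat.card {v : Fin k → K // LinearIndependent E v}
      = ∏ i ∈ Finset.range k, (Fintype.card K - Fintype.card E ^ i) := by
    rw [card_linearIndependent hk_le,
      ← Fin.prod_univ_eq_prod_range fun i => Fintype.card K - Fintype.card E ^ i]
    exact Finset.prod_congr rfl fun i _ => by rw [card_eq_pow_finrank (K := E) (V := K)]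
  -- finiteness and fiberwise counting
  haveI : Finite (Submodule F K) :=
    Finite.of_injective (fun p : Submodule F K => (p : Set K)) SetLike.coe_injective
  have hOfin : O.Finite := Set.toFinite O
  let I : Finset (Fin k → K) := Finset.univ.filter fun v => LinearIndependent E v
  have hIcard : I.card = Nat.card {v : Fin k → K // LinearIndependent E v} := by
    rw [Nat.card_eq_fintype_card, Fintype.card_subtype]
  have hmap' : ∀ v ∈ I, span F (Set.range v) ∈ hOfin.toFinset := by
    intro v hv
    rw [Set.Finite.mem_toFinset]
    exact hmem v (by simpa [I] using hv)
  have hsum := Finset.card_eq_sum_card_fiberwise hmap'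
  have hconst : ∀ V ∈ hOfin.toFinset,
      (I.filter fun v => span F (Set.range v) = V).card
        = ∏ i ∈ Finset.range k, (q ^ k - q ^ i) := by
    intro V hV
    rw [← hfiber V (hOfin.mem_toFinset.mp hV), Nat.card_eq_fintype_card,
      Fintype.card_subtype]
    congr 1
    ext v
    simp [I, Finset.mem_filter, and_assoc]
  rw [Finset.sum_congr rfl hconst, Finset.sum_const, smul_eq_mul] at hsum
  have hOcard : hOfin.toFinset.card = Set.ncard O :=
    (Set.ncard_eq_toFinset_card O hOfin).symm
  rw [← htotal, ← hIcard, hsum, hOcard]
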